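/- Let w < ℓ be natural numbers, let t be a bias threshold vector of length ℓ, and let G be a weighted directed graph on vertex set {1,…,n} with m_G > 0 and no isolated vertices. Write bind(v) = ind^t(bias_G(v)). Define the weighted directed graph K on the vertex set 𝒱 = {(v,i') : v ∈ {1,…,n}, i' ∈ Win^{w,ℓ}(bind(v))} by Adj_K((u,i'),(v,j')) = Adj_G(u,v)/|Win^{w,ℓ}(bind(u),bind(v))| for all (u,i'),(v,j') ∈ 𝒱. Then: (1) for every vertex v and every i' ∈ Win^{w,ℓ}(bind(v)), deg-out_K(v,i') = deg-out_G(v)/|Win^{w,ℓ}(bind(v))|, deg-in_K(v,i') = deg-in_G(v)/|Win^{w,ℓ}(bind(v))|, deg_K(v,i') = deg_G(v)/|Win^{w,ℓ}(bind(v))|, and bias_K(v,i') = bias_G(v); (2) m_K = m_G; and (3) val_K = val_G. -/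

import Mathlib

open Finset

/-- A weighted directed graph on a finite vertex set `V`: a nonnegative adjacency matrix
with zero diagonal. -/
structure WGraphOn (V : Type) [Fintype V] where
  Adj : V → V → ℝ
  nonneg : ∀ u v, 0 ≤ Adj u v
  diag : ∀ v, Adj v v = 0

variable {V : Type} [Fintype V]

/-- The total weight `m_G`. -/
noncomputable def mTot (G : WGraphOn V) : ℝ := ∑ u, ∑ v, G.Adj u v

/-- The out-degree `deg-out_G(v)`. -/
noncomputable def degOut (G : WGraphOn V) (v : V) : ℝ := ∑ u, G.Adj v u

/-- The in-degree `deg-in_G(v)`. -/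
noncomputable def degIn (G : WGraphOn V) (v : V) : ℝ := ∑ u, G.Adj u v

/-- The total degree `deg_G(v)`. -/
noncomputable def deg (G : WGraphOn V) (v : V) : ℝ := degOut G v + degIn G v

/-- The bias `bias_G(v) = (deg-out_G(v) − deg-in_G(v))/deg_G(v)` (junk value `0` at
isolated vertices, where all incident weights vanish anyway). -/
noncomputable def bias (G : WGraphOn V) (v : V) : ℝ := (degOut G v - degIn G v) / deg G v

/-- The (normalized) value `val_G(x)` of a cut `x`. -/
noncomputable def cutVal (G : WGraphOn V) (x : V → Bool) : ℝ :=
  (1 / mTot G) * ∑ u, ∑ v, G.Adj u v * (if x u then 1 else 0) * (if x v then 0 else 1)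

/-- The Max-DICUT value `val_G`, the maximum of `val_G(x)` over all cuts. -/
noncomputable def gval [DecidableEq V] (G : WGraphOn V) : ℝ :=
  Finset.univ.sup' Finset.univ_nonempty (cutVal G)

/-- The index `ind^t(x)` of `x` with respect to the threshold vector `(t 0, …, t ℓ)`:
the unique `i ∈ {1,…,ℓ}` with `t (i−1) ≤ x < t i`, and `ℓ` when `x = t ℓ`. -/
noncomputable def tInd (t : ℕ → ℝ) (l : ℕ) (x : ℝ) : ℕ :=
  if x = t l then l
  else ∑ i ∈ (Finset.Icc 1 l).filter (fun i => t (i - 1) ≤ x ∧ x < t i), i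

/-- The snapshot `Snap_{G,t}`. -/
noncomputable def Snap (G : WGraphOn V) (t : ℕ → ℝ) (l : ℕ) (i j : ℕ) : ℝ :=
  (1 / mTot G) * ∑ u, ∑ v,
    (if tInd t l (bias G u) = i ∧ tInd t l (bias G v) = j then G.Adj u v else 0)

/-- The 1-dimensional window `Win^{w,ℓ}(i) = {i' ∈ {1,…,ℓ} : |i' − i| ≤ w}`. -/
def Win (w l i : ℕ) : Finset ℕ :=
  (Finset.Icc 1 l).filter fun i' => i' ≤ i + w ∧ i ≤ i' + w

/-- The bias class `bind(v) = ind^t(bias_G(v))` of a vertex. -/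
noncomputable def bind' (G : WGraphOn V) (t : ℕ → ℝ) (l : ℕ) (v : V) : ℕ :=
  tInd t l (bias G v)

/-- The vertex set `𝒱 = {(v,i') : v ∈ V, i' ∈ Win^{w,ℓ}(bind(v))}` of the blowup graph. -/
def BVert (G : WGraphOn V) (t : ℕ → ℝ) (w l : ℕ) : Type :=
  {q : V × ℕ // q.2 ∈ Win w l (bind' G t l q.1)}

noncomputable instance (G : WGraphOn V) (t : ℕ → ℝ) (w l : ℕ) :
    Fintype (BVert G t w l) := by
  classical
  refine Fintype.ofFinset
    (((Finset.univ : Finset V) ×ˢ Finset.Icc 1 l).filter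
      (fun q => q.2 ∈ Win w l (bind' G t l q.1))) ?_
  intro q
  simp only [Finset.mem_filter, Finset.mem_product, Finset.mem_univ, true_and]
  constructor
  · exact fun h => h.2
  · intro h
    have hq : q.2 ∈ Win w l (bind' G t l q.1) := h
    exact ⟨(Finset.mem_filter.mp hq).1, hq⟩

noncomputable instance (G : WGraphOn V) (t : ℕ → ℝ) (w l : ℕ) :
    DecidableEq (BVert G t w l) := Classical.decEq _

/-- The blowup graph `K` of `G`, dividing the weight of each edge `(u,v)` evenly among all
copies of `u` and `v`. -/
noncomputable def blowup (G : WGraphOn V) (t : ℕ → ℝ) (w l : ℕ) :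
    WGraphOn (BVert G t w l) where
  Adj q r := G.Adj q.1.1 r.1.1 /
    (((Win w l (bind' G t l q.1.1)) ×ˢ (Win w l (bind' G t l r.1.1))).card : ℝ)
  nonneg q r := div_nonneg (G.nonneg _ _) (Nat.cast_nonneg _)
  diag q := by simp [G.diag]


section Aux

lemma t_mono {t : ℕ → ℝ} {l : ℕ} (ht : ∀ i, i < l → t i < t (i + 1)) :
    ∀ a b : ℕ, a ≤ b → b ≤ l → t a ≤ t b := by
  intro a b
  induction b with
  | zero => intro h _; simp [Nat.le_zero.mp h]
  | succ n ih =>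
    intro hab hbl
    rcases Nat.lt_or_ge a (n + 1) with h | h
    · exact le_trans (ih (Nat.lt_succ_iff.mp h) (le_trans (Nat.le_succ n) hbl))
        (le_of_lt (ht n (Nat.lt_of_succ_le hbl)))
    · have : a = n + 1 := le_antisymm hab h
      simp [this]

lemma tInd_mem {t : ℕ → ℝ} {l : ℕ} (hl : 1 ≤ l) (ht : ∀ i, i < l → t i < t (i + 1))
    {x : ℝ} (h0 : t 0 ≤ x) (h1 : x ≤ t l) : tInd t l x ∈ Finset.Icc 1 l := by
  unfold tInd
  split
  · simp [hl]
  · rename_i hne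
    have hx : x < t l := lt_of_le_of_ne h1 hne
    set A := (Finset.Icc 1 l).filter (fun i => t (i - 1) ≤ x) with hA
    have hAne : A.Nonempty := ⟨1, by simpa [hA, hl] using h0⟩
    set i0 := A.max' hAne with hi0
    have hi0A : i0 ∈ A := A.max'_mem hAne
    have hi0Icc : i0 ∈ Finset.Icc 1 l := (Finset.mem_filter.mp hi0A).1
    have hi0le : t (i0 - 1) ≤ x := (Finset.mem_filter.mp hi0A).2
    have hi0lt : x < t i0 := by
      rcases eq_or_lt_of_le (Finset.mem_Icc.mp hi0Icc).2 with h | h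
      · rw [h]; exact hx
      · by_contra hcon
        push_neg at hcon
        have : i0 + 1 ∈ A := by
          refine Finset.mem_filter.mpr ⟨Finset.mem_Icc.mpr ⟨by omega, by omega⟩, ?_⟩
          simpa using hcon
        have := A.le_max' _ this
        omega
    have hset : (Finset.Icc 1 l).filter (fun i => t (i - 1) ≤ x ∧ x < t i) = {i0} := by
      apply Finset.eq_singleton_iff_unique_mem.mpr
      constructor
      · exact Finset.mem_filter.mpr ⟨hi0Icc, hi0le, hi0lt⟩
      · intro j hj
        have hj' := Finset.mem_filter.mp hj
        have hjIcc := hj'.1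
        have hjle := hj'.2.1
        have hjlt := hj'.2.2
        have hjA : j ∈ A := Finset.mem_filter.mpr ⟨hjIcc, hjle⟩
        have hjle' : j ≤ i0 := A.le_max' _ hjA
        rcases eq_or_lt_of_le hjle' with h | h
        · exact h
        · exfalso
          have h1' : j ≤ i0 - 1 := by omega
          have h2' : i0 - 1 ≤ l := by
            have := (Finset.mem_Icc.mp hi0Icc).2; omega
          have : t j ≤ t (i0 - 1) := t_mono ht j (i0 - 1) h1' h2'
          linarith
    rw [hset]
    simpa using hi0Icc

lemma degOut_nonneg (G : WGraphOn V) (v : V) : 0 ≤ degOut G v :=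
  Finset.sum_nonneg fun u _ => G.nonneg _ _

lemma degIn_nonneg (G : WGraphOn V) (v : V) : 0 ≤ degIn G v :=
  Finset.sum_nonneg fun u _ => G.nonneg _ _

lemma bias_bounds (G : WGraphOn V) {v : V} (h : deg G v ≠ 0) :
    -1 ≤ bias G v ∧ bias G v ≤ 1 := by
  have hout := degOut_nonneg G v
  have hin := degIn_nonneg G v
  have hpos : 0 < deg G v :=
    lt_of_le_of_ne (add_nonneg hout hin) (Ne.symm h)
  constructor
  · rw [bias, le_div_iff₀ hpos]
    unfold deg; linarith
  · rw [bias, div_le_one hpos]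
    unfold deg; linarith

/-- Under the hypotheses of the theorem, every window is nonempty. -/
lemma win_card_ne (G : WGraphOn V) {t : ℕ → ℝ} {w l : ℕ} (hwl : w < l)
    (ht : ∀ i, i < l → t i < t (i + 1)) (ht0 : t 0 = -1) (htl : t l = 1)
    (hiso : ∀ v, deg G v ≠ 0) (v : V) :
    ((Win w l (bind' G t l v)).card : ℝ) ≠ 0 := by
  have hl : 1 ≤ l := by omega
  obtain ⟨hb1, hb2⟩ := bias_bounds G (hiso v)
  have hmem : bind' G t l v ∈ Finset.Icc 1 l :=
    tInd_mem hl ht (by rw [ht0]; exact hb1) (by rw [htl]; exact hb2)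
  have : bind' G t l v ∈ Win w l (bind' G t l v) :=
    Finset.mem_filter.mpr ⟨hmem, by omega, by omega⟩
  have hpos : 0 < (Win w l (bind' G t l v)).card := Finset.card_pos.mpr ⟨_, this⟩
  exact_mod_cast hpos.ne'

lemma sum_bvert (G : WGraphOn V) (t : ℕ → ℝ) (w l : ℕ) (f : V × ℕ → ℝ) :
    (∑ q : BVert G t w l, f q.1)
      = ∑ u : V, ∑ i' ∈ Win w l (bind' G t l u), f (u, i') := by
  classical
  have h1 : (∑ q ∈ ((Finset.univ : Finset V) ×ˢ Finset.Icc 1 l).filter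
        (fun q => q.2 ∈ Win w l (bind' G t l q.1)), f q)
      = ∑ q : BVert G t w l, f q.1 := by
    refine Finset.sum_subtype _ (fun q => ?_) f
    simp only [Finset.mem_filter, Finset.mem_product, Finset.mem_univ, true_and]
    constructor
    · exact fun h => h.2
    · intro h
      exact ⟨(Finset.mem_filter.mp h).1, h⟩
  rw [← h1, Finset.sum_filter, Finset.sum_product]
  refine Finset.sum_congr rfl fun u _ => ?_
  dsimp only
  rw [Finset.sum_ite_mem]
  congr 1
  exact Finset.inter_eq_right.mpr (Finset.filter_subset _ _)

lemma sum_bvert2 (G : WGraphOn V) (t : ℕ → ℝ) (w l : ℕ) (f : V × ℕ → V × ℕ → ℝ) :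
    (∑ q : BVert G t w l, ∑ r : BVert G t w l, f q.1 r.1)
      = ∑ u : V, ∑ i' ∈ Win w l (bind' G t l u),
          ∑ v : V, ∑ j' ∈ Win w l (bind' G t l v), f (u, i') (v, j') := by
  rw [sum_bvert G t w l (fun a => ∑ r : BVert G t w l, f a r.1)]
  exact Finset.sum_congr rfl fun u _ => Finset.sum_congr rfl fun i _ =>
    sum_bvert G t w l (f (u, i))

/-- The multilinear extension of the dicut value. -/
noncomputable def FF (G : WGraphOn V) (p : V → ℝ) : ℝ :=
  ∑ u, ∑ v, G.Adj u v * p u * (1 - p v)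

lemma cutVal_eq_FF (G : WGraphOn V) (x : V → Bool) :
    cutVal G x = (1 / mTot G) * FF G (fun v => if x v then 1 else 0) := by
  unfold cutVal FF
  congr 1
  refine Finset.sum_congr rfl fun u _ => Finset.sum_congr rfl fun v _ => ?_
  by_cases hu : x u <;> by_cases hv : x v <;> simp [hu, hv]

lemma FF_round (G : WGraphOn V) [DecidableEq V] :
    ∀ (s : Finset V) (p : V → ℝ), (∀ v, 0 ≤ p v ∧ p v ≤ 1) →
    (∀ v ∉ s, p v = 0 ∨ p v = 1) →
    ∃ x : V → Bool, FF G p ≤ FF G (fun v => if x v then 1 else 0) := by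
  classical
  intro s
  induction s using Finset.induction with
  | empty =>
    intro p hp hb
    refine ⟨fun v => decide (p v = 1), le_of_eq ?_⟩
    unfold FF
    refine Finset.sum_congr rfl fun u _ => Finset.sum_congr rfl fun v _ => ?_
    rcases hb u (by simp) with h | h <;> rcases hb v (by simp) with h' | h' <;>
      simp [h, h']
  | @insert a s' ha ih =>
    intro p hp hb
    have key : ∀ c : ℝ, FF G (Function.update p a c)
        = (1 - c) * FF G (Function.update p a 0) + c * FF G (Function.update p a 1) := by
      intro c
      unfold FF
      rw [Finset.mul_sum, Finset.mul_sum, ← Finset.sum_add_distrib]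
      refine Finset.sum_congr rfl fun u _ => ?_
      rw [Finset.mul_sum, Finset.mul_sum, ← Finset.sum_add_distrib]
      refine Finset.sum_congr rfl fun v _ => ?_
      by_cases hu : u = a <;> by_cases hv : v = a
      · subst hu; subst hv; simp [G.diag]
      · subst hu
        simp only [Function.update_self, Function.update_of_ne hv]
        ring
      · subst hv
        simp only [Function.update_self, Function.update_of_ne hu]
        ring
      · simp only [Function.update_of_ne hu, Function.update_of_ne hv]
        ring
    obtain ⟨hpa0, hpa1⟩ := hp a
    have hup : Function.update p a (p a) = p := Function.update_eq_self a p
    have bounds : ∀ c : ℝ, 0 ≤ c → c ≤ 1 → ∀ v, 0 ≤ Function.update p a c v ∧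
        Function.update p a c v ≤ 1 := by
      intro c hc0 hc1 v
      by_cases hv : v = a
      · subst hv; simp [hc0, hc1]
      · rw [Function.update_of_ne hv]; exact hp v
    have bool : ∀ c : ℝ, (c = 0 ∨ c = 1) → ∀ v ∉ s',
        Function.update p a c v = 0 ∨ Function.update p a c v = 1 := by
      intro c hc v hv
      by_cases hva : v = a
      · subst hva; simpa using hc
      · rw [Function.update_of_ne hva]
        exact hb v (by simp [hva, hv])
    rcases le_total (FF G (Function.update p a 0)) (FF G (Function.update p a 1))
        with hle | hle
    · obtain ⟨x, hx⟩ := ih (Function.update p a 1)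
        (bounds 1 zero_le_one le_rfl) (bool 1 (Or.inr rfl))
      refine ⟨x, le_trans ?_ hx⟩
      have := key (p a)
      rw [hup] at this
      rw [this]
      nlinarith
    · obtain ⟨x, hx⟩ := ih (Function.update p a 0)
        (bounds 0 le_rfl zero_le_one) (bool 0 (Or.inl rfl))
      refine ⟨x, le_trans ?_ hx⟩
      have := key (p a)
      rw [hup] at this
      rw [this]
      nlinarith

end Aux

theorem stmt16 (V : Type) [Fintype V] [DecidableEq V] (w l : ℕ) (hwl : w < l)
    (t : ℕ → ℝ) (ht : ∀ i, i < l → t i < t (i + 1)) (ht0 : t 0 = -1) (htl : t l = 1)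
    (G : WGraphOn V) (hm : 0 < mTot G) (hiso : ∀ v, deg G v ≠ 0) :
    (∀ q : BVert G t w l,
      degOut (blowup G t w l) q
          = degOut G q.1.1 / ((Win w l (bind' G t l q.1.1)).card : ℝ) ∧
      degIn (blowup G t w l) q
          = degIn G q.1.1 / ((Win w l (bind' G t l q.1.1)).card : ℝ) ∧
      deg (blowup G t w l) q
          = deg G q.1.1 / ((Win w l (bind' G t l q.1.1)).card : ℝ) ∧
      bias (blowup G t w l) q = bias G q.1.1) ∧
    mTot (blowup G t w l) = mTot G ∧
    gval (blowup G t w l) = gval G := by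
  classical
  have hc : ∀ v : V, ((Win w l (bind' G t l v)).card : ℝ) ≠ 0 :=
    win_card_ne G hwl ht ht0 htl hiso
  have hcpos : ∀ v : V, (0:ℝ) < ((Win w l (bind' G t l v)).card : ℝ) :=
    fun v => lt_of_le_of_ne (Nat.cast_nonneg _) (Ne.symm (hc v))
  have hAdj : ∀ q r : BVert G t w l, (blowup G t w l).Adj q r
      = G.Adj q.1.1 r.1.1
        / (((Win w l (bind' G t l q.1.1)).card : ℝ) * ((Win w l (bind' G t l r.1.1)).card : ℝ)) := by
    intro q r
    show G.Adj q.1.1 r.1.1 /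
        ((((Win w l (bind' G t l q.1.1)) ×ˢ (Win w l (bind' G t l r.1.1))).card : ℝ)) = _
    rw [Finset.card_product, Nat.cast_mul]
  -- degrees
  have hdegOut : ∀ q : BVert G t w l, degOut (blowup G t w l) q
      = degOut G q.1.1 / ((Win w l (bind' G t l q.1.1)).card : ℝ) := by
    intro q
    unfold degOut
    calc (∑ r : BVert G t w l, (blowup G t w l).Adj q r)
        = ∑ r : BVert G t w l, (fun b : V × ℕ => G.Adj q.1.1 b.1
            / (((Win w l (bind' G t l q.1.1)).card : ℝ) * ((Win w l (bind' G t l b.1)).card : ℝ))) r.1 :=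
          Finset.sum_congr rfl fun r _ => hAdj q r
      _ = ∑ v : V, ∑ j' ∈ Win w l (bind' G t l v), G.Adj q.1.1 v
            / (((Win w l (bind' G t l q.1.1)).card : ℝ) * ((Win w l (bind' G t l v)).card : ℝ)) :=
          sum_bvert G t w l (fun b : V × ℕ => G.Adj q.1.1 b.1
            / (((Win w l (bind' G t l q.1.1)).card : ℝ) * ((Win w l (bind' G t l b.1)).card : ℝ)))
      _ = ∑ v : V, G.Adj q.1.1 v / ((Win w l (bind' G t l q.1.1)).card : ℝ) := by
          refine Finset.sum_congr rfl fun v _ => ?_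
          rw [Finset.sum_const, nsmul_eq_mul]
          field_simp [hc v, hc q.1.1]
      _ = (∑ v : V, G.Adj q.1.1 v) / ((Win w l (bind' G t l q.1.1)).card : ℝ) :=
          (Finset.sum_div _ _ _).symm
  have hdegIn : ∀ q : BVert G t w l, degIn (blowup G t w l) q
      = degIn G q.1.1 / ((Win w l (bind' G t l q.1.1)).card : ℝ) := by
    intro q
    unfold degIn
    calc (∑ r : BVert G t w l, (blowup G t w l).Adj r q)
        = ∑ r : BVert G t w l, (fun b : V × ℕ => G.Adj b.1 q.1.1
            / (((Win w l (bind' G t l b.1)).card : ℝ) * ((Win w l (bind' G t l q.1.1)).card : ℝ))) r.1 :=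
          Finset.sum_congr rfl fun r _ => hAdj r q
      _ = ∑ v : V, ∑ j' ∈ Win w l (bind' G t l v), G.Adj v q.1.1
            / (((Win w l (bind' G t l v)).card : ℝ) * ((Win w l (bind' G t l q.1.1)).card : ℝ)) :=
          sum_bvert G t w l (fun b : V × ℕ => G.Adj b.1 q.1.1
            / (((Win w l (bind' G t l b.1)).card : ℝ) * ((Win w l (bind' G t l q.1.1)).card : ℝ)))
      _ = ∑ v : V, G.Adj v q.1.1 / ((Win w l (bind' G t l q.1.1)).card : ℝ) := by
          refine Finset.sum_congr rfl fun v _ => ?_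
          rw [Finset.sum_const, nsmul_eq_mul]
          field_simp [hc v, hc q.1.1]
      _ = (∑ v : V, G.Adj v q.1.1) / ((Win w l (bind' G t l q.1.1)).card : ℝ) :=
          (Finset.sum_div _ _ _).symm
  have hdeg : ∀ q : BVert G t w l, deg (blowup G t w l) q
      = deg G q.1.1 / ((Win w l (bind' G t l q.1.1)).card : ℝ) := by
    intro q
    rw [deg, hdegOut q, hdegIn q, ← add_div, deg]
  have hbias : ∀ q : BVert G t w l, bias (blowup G t w l) q = bias G q.1.1 := by
    intro q
    rw [bias, hdegOut q, hdegIn q, hdeg q, bias, div_sub_div_same]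
    rw [div_div_div_cancel_right₀]
    exact hc q.1.1
  -- total weight
  have hmK : mTot (blowup G t w l) = mTot G := by
    unfold mTot
    calc (∑ q : BVert G t w l, ∑ r : BVert G t w l, (blowup G t w l).Adj q r)
        = ∑ q : BVert G t w l, ∑ r : BVert G t w l,
            (fun a b : V × ℕ => G.Adj a.1 b.1
              / (((Win w l (bind' G t l a.1)).card : ℝ) * ((Win w l (bind' G t l b.1)).card : ℝ)))
            q.1 r.1 :=
          Finset.sum_congr rfl fun q _ => Finset.sum_congr rfl fun r _ => hAdj q r
      _ = ∑ u : V, ∑ i' ∈ Win w l (bind' G t l u), ∑ v : V, ∑ j' ∈ Win w l (bind' G t l v),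
            G.Adj u v / (((Win w l (bind' G t l u)).card : ℝ) * ((Win w l (bind' G t l v)).card : ℝ)) :=
          sum_bvert2 G t w l (fun a b : V × ℕ => G.Adj a.1 b.1
            / (((Win w l (bind' G t l a.1)).card : ℝ) * ((Win w l (bind' G t l b.1)).card : ℝ)))
      _ = ∑ u : V, ∑ v : V, G.Adj u v := by
          refine Finset.sum_congr rfl fun u _ => ?_
          rw [Finset.sum_const, nsmul_eq_mul, Finset.mul_sum]
          refine Finset.sum_congr rfl fun v _ => ?_
          rw [Finset.sum_const, nsmul_eq_mul]
          field_simp [hc u, hc v]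
  -- cut values on the blowup
  have hcv : ∀ Y : V × ℕ → Bool,
      cutVal (blowup G t w l) (fun q => Y q.1)
        = (1 / mTot G) * FF G (fun u =>
            (∑ i' ∈ Win w l (bind' G t l u), if Y (u, i') then (1:ℝ) else 0)
              / ((Win w l (bind' G t l u)).card : ℝ)) := by
    intro Y
    unfold cutVal
    rw [hmK]
    congr 1
    calc (∑ q : BVert G t w l, ∑ r : BVert G t w l,
            (blowup G t w l).Adj q r * (if Y q.1 then (1:ℝ) else 0) * (if Y r.1 then 0 else 1))
        = ∑ q : BVert G t w l, ∑ r : BVert G t w l,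
            (fun a b : V × ℕ => G.Adj a.1 b.1
              / (((Win w l (bind' G t l a.1)).card : ℝ) * ((Win w l (bind' G t l b.1)).card : ℝ))
              * (if Y a then (1:ℝ) else 0) * (if Y b then 0 else 1)) q.1 r.1 := by
          refine Finset.sum_congr rfl fun q _ => Finset.sum_congr rfl fun r _ => ?_
          rw [hAdj q r]
      _ = ∑ u : V, ∑ i' ∈ Win w l (bind' G t l u), ∑ v : V, ∑ j' ∈ Win w l (bind' G t l v),
            G.Adj u v
              / (((Win w l (bind' G t l u)).card : ℝ) * ((Win w l (bind' G t l v)).card : ℝ))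
              * (if Y (u, i') then (1:ℝ) else 0) * (if Y (v, j') then 0 else 1) :=
          sum_bvert2 G t w l (fun a b : V × ℕ => G.Adj a.1 b.1
            / (((Win w l (bind' G t l a.1)).card : ℝ) * ((Win w l (bind' G t l b.1)).card : ℝ))
            * (if Y a then (1:ℝ) else 0) * (if Y b then 0 else 1))
      _ = FF G (fun u =>
            (∑ i' ∈ Win w l (bind' G t l u), if Y (u, i') then (1:ℝ) else 0)
              / ((Win w l (bind' G t l u)).card : ℝ)) := by
          unfold FF
          refine Finset.sum_congr rfl fun u _ => ?_
          rw [Finset.sum_comm]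
          refine Finset.sum_congr rfl fun v _ => ?_
          have e1 : ∀ j' : ℕ, (if Y (v, j') then (0:ℝ) else 1)
              = 1 - (if Y (v, j') then 1 else 0) := by
            intro j'; by_cases h : Y (v, j') <;> simp [h]
          calc (∑ i' ∈ Win w l (bind' G t l u), ∑ j' ∈ Win w l (bind' G t l v),
                  G.Adj u v
                    / (((Win w l (bind' G t l u)).card : ℝ) * ((Win w l (bind' G t l v)).card : ℝ))
                    * (if Y (u, i') then (1:ℝ) else 0) * (if Y (v, j') then 0 else 1))
              = (∑ i' ∈ Win w l (bind' G t l u),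
                  G.Adj u v
                    / (((Win w l (bind' G t l u)).card : ℝ) * ((Win w l (bind' G t l v)).card : ℝ))
                    * (if Y (u, i') then (1:ℝ) else 0))
                * (∑ j' ∈ Win w l (bind' G t l v), (if Y (v, j') then (0:ℝ) else 1)) := by
                rw [Finset.sum_mul]
                exact Finset.sum_congr rfl fun i' _ => (Finset.mul_sum _ _ _).symm
            _ = G.Adj u v
                  / (((Win w l (bind' G t l u)).card : ℝ) * ((Win w l (bind' G t l v)).card : ℝ))
                * (∑ i' ∈ Win w l (bind' G t l u), if Y (u, i') then (1:ℝ) else 0)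
                * (((Win w l (bind' G t l v)).card : ℝ)
                    - ∑ j' ∈ Win w l (bind' G t l v), if Y (v, j') then (1:ℝ) else 0) := by
                rw [← Finset.mul_sum]
                congr 1
                simp_rw [e1]
                rw [Finset.sum_sub_distrib, Finset.sum_const, nsmul_eq_mul, mul_one]
            _ = G.Adj u v
                * ((∑ i' ∈ Win w l (bind' G t l u), if Y (u, i') then (1:ℝ) else 0)
                    / ((Win w l (bind' G t l u)).card : ℝ))
                * (1 - (∑ j' ∈ Win w l (bind' G t l v), if Y (v, j') then (1:ℝ) else 0)
                    / ((Win w l (bind' G t l v)).card : ℝ)) := by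
                field_simp [hc u, hc v]
  -- bounds on the fractional cut
  have hPb : ∀ (Y : V × ℕ → Bool) (u : V),
      0 ≤ (∑ i' ∈ Win w l (bind' G t l u), if Y (u, i') then (1:ℝ) else 0)
            / ((Win w l (bind' G t l u)).card : ℝ) ∧
      (∑ i' ∈ Win w l (bind' G t l u), if Y (u, i') then (1:ℝ) else 0)
            / ((Win w l (bind' G t l u)).card : ℝ) ≤ 1 := by
    intro Y u
    have h0 : (0:ℝ) ≤ ∑ i' ∈ Win w l (bind' G t l u), if Y (u, i') then (1:ℝ) else 0 :=
      Finset.sum_nonneg fun i _ => by split <;> norm_num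
    have h1 : (∑ i' ∈ Win w l (bind' G t l u), if Y (u, i') then (1:ℝ) else 0)
        ≤ ((Win w l (bind' G t l u)).card : ℝ) := by
      calc (∑ i' ∈ Win w l (bind' G t l u), if Y (u, i') then (1:ℝ) else 0)
          ≤ ∑ i' ∈ Win w l (bind' G t l u), (1:ℝ) :=
            Finset.sum_le_sum fun i _ => by split <;> norm_num
        _ = ((Win w l (bind' G t l u)).card : ℝ) := by
            rw [Finset.sum_const, nsmul_eq_mul, mul_one]
    exact ⟨div_nonneg h0 (Nat.cast_nonneg _), (div_le_one (hcpos u)).mpr h1⟩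
  -- the gval equality
  have hgval : gval (blowup G t w l) = gval G := by
    apply le_antisymm
    · apply Finset.sup'_le
      intro y _
      set Y : V × ℕ → Bool :=
        fun p => if h : p.2 ∈ Win w l (bind' G t l p.1) then y ⟨p, h⟩ else false with hY
      have hyY : y = fun q : BVert G t w l => Y q.1 := by
        funext q
        rw [hY]
        simp only [q.2, dif_pos]
        exact (congrArg y (Subtype.coe_eta q q.2)).symm
      rw [hyY, hcv Y]
      obtain ⟨x, hx⟩ := FF_round G Finset.univ _ (hPb Y)
        (fun v hv => absurd (Finset.mem_univ v) hv)
      calc (1 / mTot G) * FF G (fun u =>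
              (∑ i' ∈ Win w l (bind' G t l u), if Y (u, i') then (1:ℝ) else 0)
                / ((Win w l (bind' G t l u)).card : ℝ))
          ≤ (1 / mTot G) * FF G (fun v => if x v then 1 else 0) :=
            mul_le_mul_of_nonneg_left hx (by positivity)
        _ = cutVal G x := (cutVal_eq_FF G x).symm
        _ ≤ gval G := Finset.le_sup' _ (Finset.mem_univ x)
    · apply Finset.sup'_le
      intro x _
      have hxK : cutVal (blowup G t w l) (fun q => x q.1.1) = cutVal G x := by
        rw [hcv (fun p => x p.1), cutVal_eq_FF G x]
        congr 1
        congr 1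
        funext u
        dsimp only
        have e : ∀ c : ℝ, (∑ _i' ∈ Win w l (bind' G t l u), c)
            = ((Win w l (bind' G t l u)).card : ℝ) * c := fun c => by
          rw [Finset.sum_const, nsmul_eq_mul]
        refine Eq.trans (congrArg (fun z => z / ((Win w l (bind' G t l u)).card : ℝ)) ?_)
          (mul_div_cancel_left₀ _ (hc u))
        rw [← e (if x u = true then (1:ℝ) else 0)]
      calc cutVal G x = cutVal (blowup G t w l) (fun q => x q.1.1) := hxK.symm
        _ ≤ gval (blowup G t w l) := Finset.le_sup' _ (Finset.mem_univ _)
  exact ⟨fun q => ⟨hdegOut q, hdegIn q, hdeg q, hbias q⟩, hmK, hgval⟩
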